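/- (Supply-maximization property of the best-effort rate, part of the proof of Lemma 1.) Fix a monotonic CTM, a time t, a state with ρ_j(t) ∈ [0, ρ̄_j] and 0 ≤ q_j(t) ≤ q̄_j for all j, and external demands 0 ≤ w_j(t) ≤ r̄_j. Fix a cell k with 1 ≤ k ≤ n−1. For a metering rate r at cell k+1, let ρ_{k+1}^r(t+1) := ρ_{k+1}(t) + (Δt/l_{k+1})(φ_k(t) + r − φ_{k+1}(t)/β̄_{k+1}). Then the best-effort rate r*_{k+1}(t) maximizes the next-step supply over all feasible rates: for every r with max{0, (q_{k+1}(t) − q̄_{k+1})/Δt + w_{k+1}(t)} ≤ r ≤ min{r̄_{k+1}, q_{k+1}(t)/Δt + w_{k+1}(t)}, one has s_{k+1}(ρ_{k+1}^r(t+1)) ≤ s_{k+1}(ρ_{k+1}^{r*_{k+1}(t)}(t+1)). -/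

import Mathlib

open Finset NNReal

/-- A **monotonic Cell Transmission Model** (CTM) of a freeway with `n` cells,
indexed by `k ∈ {1,…,n}` (index `0` refers to the upstream mainline boundary,
and the data attached to indices outside `{1,…,n}` is irrelevant junk).
The fields collect the parameters of the model: cell lengths `l k > 0`,
offramp split ratios `β k ∈ [0,1)`, sampling time `Δt > 0`, jam densities
`ρjam k > 0`, critical densities `ρc k ∈ (0, ρjam k)`, nondecreasing Lipschitz
demand functions `d k` (vanishing for `ρ ≤ 0` and constant on `[ρc k, ∞)`),
nonincreasing Lipschitz supply functions `s k` (constant on `(-∞, ρc k]` and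
vanishing on `[ρjam k, ∞)`), together with Assumption 1 of the paper:
`Δt·cd k ≤ l k·(1 − β k)` and `Δt·cs k ≤ l k`. -/
structure CTM (n : ℕ) where
  /-- cell lengths -/
  l : ℕ → ℝ
  /-- offramp split ratios -/
  β : ℕ → ℝ
  /-- sampling time -/
  Δt : ℝ
  /-- jam densities -/
  ρjam : ℕ → ℝ
  /-- critical densities -/
  ρc : ℕ → ℝ
  /-- demand functions of the fundamental diagram -/
  d : ℕ → ℝ → ℝ
  /-- supply functions of the fundamental diagram -/
  s : ℕ → ℝ → ℝ
  /-- Lipschitz constants of the demand functions -/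
  cd : ℕ → ℝ≥0
  /-- Lipschitz constants of the supply functions -/
  cs : ℕ → ℝ≥0
  hl : ∀ k, 0 < l k
  hβ : ∀ k, 0 ≤ β k ∧ β k < 1
  hΔt : 0 < Δt
  hρjam : ∀ k, 0 < ρjam k
  hρc : ∀ k, 0 < ρc k ∧ ρc k < ρjam k
  hd_nonneg : ∀ k x, 0 ≤ d k x
  hd_mono : ∀ k, Monotone (d k)
  hd_lip : ∀ k, LipschitzWith (cd k) (d k)
  hd_zero : ∀ k x, x ≤ 0 → d k x = 0
  hd_const : ∀ k x, ρc k ≤ x → d k x = d k (ρc k)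
  hs_nonneg : ∀ k x, 0 ≤ s k x
  hs_anti : ∀ k, Antitone (s k)
  hs_lip : ∀ k, LipschitzWith (cs k) (s k)
  hs_const : ∀ k x, x ≤ ρc k → s k x = s k (ρc k)
  hs_zero : ∀ k x, ρjam k ≤ x → s k x = 0
  /-- Assumption 1, demand part: `Δt·cd k ≤ l k·β̄ k`. -/
  assumption1_d : ∀ k, Δt * (cd k : ℝ) ≤ l k * (1 - β k)
  /-- Assumption 1, supply part: `Δt·cs k ≤ l k`. -/
  assumption1_s : ∀ k, Δt * (cs k : ℝ) ≤ l k

namespace CTM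

variable {n : ℕ}

/-- Complement `β̄ k := 1 − β k` of the split ratio. -/
def βbar (M : CTM n) (k : ℕ) : ℝ := 1 - M.β k

/-- Mainline flows as functions of the densities: `φ_0 = w_0` (external upstream
demand), `φ_k = min{d_k(ρ_k), s_{k+1}(ρ_{k+1})}` for `1 ≤ k ≤ n−1`, and
`φ_n = d_n(ρ_n)`. -/
noncomputable def flow (M : CTM n) (w0 : ℝ) (ρ : ℕ → ℝ) (k : ℕ) : ℝ :=
  if k = 0 then w0
  else if k < n then min (M.d k (ρ k)) (M.s (k + 1) (ρ (k + 1)))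
  else M.d n (ρ n)

/-- Interface capacities: `F_k = min{d_k(ρ_k^c), s_{k+1}(ρ_{k+1}^c)}` for
`k ≤ n−1` and `F_n = d_n(ρ_n^c)`. -/
noncomputable def F (M : CTM n) (k : ℕ) : ℝ :=
  if k < n then min (M.d k (M.ρc k)) (M.s (k + 1) (M.ρc (k + 1)))
  else M.d n (M.ρc n)

/-- Saturation `[x]ᵘₗ := min{u, max{x, l}}`. -/
noncomputable def sat (x lo hi : ℝ) : ℝ := min hi (max x lo)

/-- The best-effort metering rate
`r*_k = [ (l_k/Δt)(ρ_k^c − ρ_k) + φ_k/β̄_k − φ_{k−1} ]` saturated to the interval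
`[max{0, (q_k − q̄_k)/Δt + w_k}, min{r̄_k, q_k/Δt + w_k}]`. -/
noncomputable def beRate (M : CTM n) (w0 : ℝ) (ρ q w rbar qbar : ℕ → ℝ) (k : ℕ) : ℝ :=
  sat (M.l k / M.Δt * (M.ρc k - ρ k) + M.flow w0 ρ k / M.βbar k - M.flow w0 ρ (k - 1))
      (max 0 ((q k - qbar k) / M.Δt + w k))
      (min (rbar k) (q k / M.Δt + w k))

/-- One step of the density conservation law:
`ρ_k(t+1) = ρ_k(t) + (Δt/l_k)(φ_{k−1}(t) + r_k(t) − φ_k(t)/β̄_k)`. -/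
noncomputable def ρnext (M : CTM n) (w0 : ℝ) (ρ r : ℕ → ℝ) (k : ℕ) : ℝ :=
  ρ k + M.Δt / M.l k * (M.flow w0 ρ (k - 1) + r k - M.flow w0 ρ k / M.βbar k)

/-- Cell `k` is **restrictive** (Definition 1) if either (i) the onramp is not
full and the inflow is limited by non-maximal supply, or (ii) the onramp is
nonempty and the outflow is limited by non-maximal demand. -/
noncomputable def Restrictive (M : CTM n) (w0 : ℝ) (ρ q qbar : ℕ → ℝ) (k : ℕ) : Prop :=
  (q k < qbar k ∧ M.flow w0 ρ (k - 1) = M.s k (ρ k) ∧ M.s k (ρ k) < M.F (k - 1)) ∨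
  (0 < q k ∧ M.flow w0 ρ k = M.d k (ρ k) ∧ M.d k (ρ k) < M.F k)

/-- Densities recovered from the cumulative state of the CCTM:
`ρ_k = (Φ_{k−1} − Φ_k/β̄_k + R_k)/l_k`. -/
noncomputable def ρof (M : CTM n) (Φ R : ℕ → ℝ) (k : ℕ) : ℝ :=
  (Φ (k - 1) - Φ k / M.βbar k + R k) / M.l k

/-- The CCTM update maps `f_k(Φ, R) := Φ_k + Δt·φ_k`. -/
noncomputable def f (M : CTM n) (w0 : ℝ) (Φ R : ℕ → ℝ) (k : ℕ) : ℝ :=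
  Φ k + M.Δt * M.flow w0 (M.ρof Φ R) k

/-- `Traj M w ρ q r` states that the densities `ρ`, queues `q` obey the CTM
conservation laws under the metering rates `r` and external demands `w`
(`w t 0` is the upstream mainline demand, `w t k` the onramp demand at cell `k`). -/
noncomputable def Traj (M : CTM n) (w : ℕ → ℕ → ℝ) (ρ q r : ℕ → ℕ → ℝ) : Prop :=
  ∀ t k, 1 ≤ k → k ≤ n →
    ρ (t + 1) k = M.ρnext (w t 0) (ρ t) (r t) k ∧
    q (t + 1) k = q t k + M.Δt * (w t k - r t k)

/-- Total Time Spent `TTS = Δt · Σ_{t=0}^{T} Σ_{k=1}^{n} (l_k ρ_k(t) + q_k(t))`. -/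
noncomputable def TTS (M : CTM n) (T : ℕ) (ρ q : ℕ → ℕ → ℝ) : ℝ :=
  M.Δt * ∑ t ∈ Finset.range (T + 1), ∑ k ∈ Finset.Icc 1 n, (M.l k * ρ t k + q t k)

end CTM

/-- **Supply-maximization property of the best-effort rate (part of the proof of
Lemma 1).**  Fix a monotonic CTM, a state with `ρ_j ∈ [0, ρ̄_j]` and
`q_j ∈ [0, q̄_j]` for all cells `j`, and external demands `0 ≤ w_j ≤ r̄_j`.
Fix a cell `k` with `1 ≤ k ≤ n−1`.  For a metering rate `r` at cell `k+1`, the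
next-step density is `ρ_{k+1}^r(t+1) = ρ_{k+1} + (Δt/l_{k+1})(φ_k + r − φ_{k+1}/β̄_{k+1})`.
The best-effort rate maximizes the next-step supply `s_{k+1}(ρ_{k+1}^r(t+1))` over
all feasible rates
`r ∈ [max{0, (q_{k+1} − q̄_{k+1})/Δt + w_{k+1}}, min{r̄_{k+1}, q_{k+1}/Δt + w_{k+1}}]`. -/
theorem beRate_maximizes_supply {n : ℕ} (M : CTM n) (w0 : ℝ)
    (ρ q w rbar qbar : ℕ → ℝ)
    (hρ : ∀ j, 1 ≤ j → j ≤ n → ρ j ∈ Set.Icc 0 (M.ρjam j))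
    (hq : ∀ j, 1 ≤ j → j ≤ n → q j ∈ Set.Icc 0 (qbar j))
    (hw : ∀ j, 1 ≤ j → j ≤ n → w j ∈ Set.Icc 0 (rbar j))
    (hrbar : ∀ j, 0 ≤ rbar j) (hqbar : ∀ j, 0 ≤ qbar j)
    (k : ℕ) (hk1 : 1 ≤ k) (hkn : k ≤ n - 1)
    (r : ℝ)
    (hr_lo : max 0 ((q (k + 1) - qbar (k + 1)) / M.Δt + w (k + 1)) ≤ r)
    (hr_hi : r ≤ min (rbar (k + 1)) (q (k + 1) / M.Δt + w (k + 1))) :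
    M.s (k + 1) (M.ρnext w0 ρ (fun _ => r) (k + 1)) ≤
      M.s (k + 1) (M.ρnext w0 ρ (fun _ => M.beRate w0 ρ q w rbar qbar (k + 1)) (k + 1)) := by
  have hlpos := M.hl (k + 1)
  have hΔtpos := M.hΔt
  have hβpos : (0:ℝ) < M.βbar (k + 1) := by
    have := (M.hβ (k + 1)).2
    unfold CTM.βbar; linarith
  set x : ℝ := M.l (k + 1) / M.Δt * (M.ρc (k + 1) - ρ (k + 1)) +
      M.flow w0 ρ (k + 1) / M.βbar (k + 1) - M.flow w0 ρ k with hxdef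
  set lo : ℝ := max 0 ((q (k + 1) - qbar (k + 1)) / M.Δt + w (k + 1)) with hlodef
  set hi : ℝ := min (rbar (k + 1)) (q (k + 1) / M.Δt + w (k + 1)) with hhidef
  have hrst : M.beRate w0 ρ q w rbar qbar (k + 1) = CTM.sat x lo hi := by
    unfold CTM.beRate
    simp only [Nat.add_sub_cancel]
    rfl
  set c : ℝ := M.Δt / M.l (k + 1) with hcdef
  have hcpos : 0 < c := div_pos hΔtpos hlpos
  have key : ∀ rr : ℝ, M.ρnext w0 ρ (fun _ => rr) (k + 1) =
      M.ρc (k + 1) + c * (rr - x) := by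
    intro rr
    unfold CTM.ρnext
    simp only [Nat.add_sub_cancel, hxdef, hcdef]
    field_simp
    ring
  have smax : ∀ y : ℝ, M.s (k + 1) y ≤ M.s (k + 1) (M.ρc (k + 1)) := by
    intro y
    rcases le_or_gt y (M.ρc (k + 1)) with h | h
    · rw [M.hs_const (k + 1) y h]
    · exact M.hs_anti (k + 1) h.le
  have hlohi : lo ≤ hi := le_trans hr_lo hr_hi
  rw [hrst, key r, key (CTM.sat x lo hi)]
  rcases le_or_gt x lo with h1 | h1
  · have hst : CTM.sat x lo hi = lo := by
      unfold CTM.sat; rw [max_eq_right h1, min_eq_right hlohi]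
    rw [hst]
    have hler : lo ≤ r := hr_lo
    apply M.hs_anti
    nlinarith
  · rcases le_or_gt x hi with h2 | h2
    · have hst : CTM.sat x lo hi = x := by
        unfold CTM.sat; rw [max_eq_left h1.le, min_eq_right h2]
      rw [hst]
      simp only [sub_self, mul_zero, add_zero]
      exact smax _
    · have hst : CTM.sat x lo hi = hi := by
        unfold CTM.sat
        rw [max_eq_left h1.le, min_eq_left h2.le]
      rw [hst]
      have h3 : M.ρc (k + 1) + c * (hi - x) ≤ M.ρc (k + 1) := by nlinarith
      rw [M.hs_const (k + 1) _ h3]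
      have h4 : M.ρc (k + 1) + c * (r - x) ≤ M.ρc (k + 1) := by
        have : r ≤ hi := hr_hi
        nlinarith
      rw [M.hs_const (k + 1) _ h4]
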